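/- (Correctness bound of the scalable E_8 lattice decoding.) Let λ > 0 be a real number, let k1 in F_2^4, and set v1 = λ·(k1 H) in ℝ^8. If v2 in ℝ^8 satisfies ‖v2 − v1‖_{2λ,2} < λ, then for every k in F_2^4 with k ≠ k1 one has ‖v2 − λ·(kH)‖_{2λ,2} > ‖v2 − v1‖_{2λ,2}; hence k1 is the unique minimizer of k ↦ ‖v2 − λ·(kH)‖_{2λ,2} over F_2^4, i.e., the closest-point decoding of v2 in the scalable E_8 lattice code recovers k1. -/

import Mathlib

/-- The centered representative `x mod± p ∈ [-p/2, p/2)`. -/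
noncomputable def cmod (p x : ℝ) : ℝ := x - p * (⌊x / p + 1/2⌋ : ℤ)

/-- The `p`-periodic ℓ₂ norm `‖w‖_{p,2}`. -/
noncomputable def pnorm (p : ℝ) {d : ℕ} (w : Fin d → ℝ) : ℝ :=
  Real.sqrt (∑ i, (cmod p (w i)) ^ 2)

/-- The generator matrix `H` of the Extended Hamming Code `H₈` over `F₂`. -/
def Hmat : Matrix (Fin 4) (Fin 8) (ZMod 2) :=
  !![1,1,1,1,0,0,0,0;
     0,0,1,1,1,1,0,0;
     0,0,0,0,1,1,1,1;
     0,1,0,1,0,1,0,1]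

/-- The scaled `E₈` lattice point `λ·(kH) ∈ ℝ⁸` attached to `k ∈ F₂⁴`. -/
noncomputable def encodeE8 (lam : ℝ) (k : Fin 4 → ZMod 2) : Fin 8 → ℝ :=
  fun i => lam * ((Matrix.vecMul k Hmat) i).val

lemma cmod_sub_period (p x : ℝ) (hp : 0 < p) : cmod p (x - p) = cmod p x := by
  unfold cmod
  have he : (x - p)/p + 1/2 = (x/p + 1/2) + (-1 : ℤ) := by push_cast; field_simp; ring
  rw [he, Int.floor_add_intCast]; push_cast; ring

lemma cmod_half_sq (p x : ℝ) (hp : 0 < p) :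
    (cmod p (x + p/2))^2 = (cmod p x)^2 + (p/2)^2 - p * |cmod p x| := by
  have hx1 : cmod p x = p * (Int.fract (x/p + 1/2) - 1/2) := by
    unfold cmod Int.fract; field_simp; ring
  have hx2 : cmod p (x + p/2) = p * (Int.fract (x/p) - 1/2) := by
    unfold cmod
    have he : (x + p/2)/p + 1/2 = x/p + (1 : ℤ) := by push_cast; field_simp; ring
    rw [he, Int.floor_add_intCast]
    unfold Int.fract; push_cast; field_simp; ring
  set f := Int.fract (x/p) with hf
  have hf0 : 0 ≤ f := Int.fract_nonneg _
  have hf1 : f < 1 := Int.fract_lt_one _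
  have key : Int.fract (x/p + 1/2) = Int.fract (f + 1/2) := by
    rw [show x/p + 1/2 = (⌊x/p⌋ : ℝ) + (f + 1/2) by
      rw [hf, Int.fract]; ring]
    rw [Int.fract_intCast_add]
  by_cases hc : f < 1/2
  · have : Int.fract (f + 1/2) = f + 1/2 :=
      Int.fract_eq_self.mpr ⟨by linarith, by linarith⟩
    rw [hx1, hx2, key, this, abs_of_nonneg (by nlinarith)]
    ring
  · push_neg at hc
    have : Int.fract (f + 1/2) = f - 1/2 := by
      rw [show f + 1/2 = (f - 1/2) + (1 : ℤ) by push_cast; ring, Int.fract_add_intCast]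
      exact Int.fract_eq_self.mpr ⟨by linarith, by linarith⟩
    rw [hx1, hx2, key, this, abs_of_nonpos (by nlinarith)]
    ring

lemma cmod_half_sq' (p x : ℝ) (hp : 0 < p) :
    (cmod p (x - p/2))^2 = (cmod p x)^2 + (p/2)^2 - p * |cmod p x| := by
  rw [show x - p/2 = (x + p/2) - p by ring, cmod_sub_period _ _ hp, cmod_half_sq _ _ hp]

lemma Hmat_dist (k k₁ : Fin 4 → ZMod 2) (hne : k ≠ k₁) :
    4 ≤ (Finset.univ.filter (fun i => Matrix.vecMul k Hmat i ≠ Matrix.vecMul k₁ Hmat i)).card := by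
  revert hne; revert k k₁; decide

lemma zmod2_cases (a b : ZMod 2) (h : a ≠ b) :
    ((a.val : ℝ) = b.val + 1) ∨ ((a.val : ℝ) = b.val - 1) := by
  have : (a = 0 ∧ b = 1) ∨ (a = 1 ∧ b = 0) := by revert h; revert a b; decide
  have h0 : (0 : ZMod 2).val = 0 := rfl
  have h1 : (1 : ZMod 2).val = 1 := rfl
  rcases this with ⟨ha, hb⟩ | ⟨ha, hb⟩ <;> subst ha <;> subst hb <;>
    rw [h0, h1] <;> norm_num

/-- Correctness bound of the scalable `E₈` lattice decoding: if
`‖v₂ − λ·(k₁H)‖_{2λ,2} < λ`, then every other codeword `λ·(kH)` (`k ≠ k₁`) is strictly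
farther from `v₂`, so closest-point decoding of `v₂` recovers `k₁` uniquely. -/
theorem scalable_E8_decoding_correctness (lam : ℝ) (hlam : 0 < lam)
    (k₁ : Fin 4 → ZMod 2) (v₂ : Fin 8 → ℝ)
    (h : pnorm (2 * lam) (v₂ - encodeE8 lam k₁) < lam) :
    ∀ k : Fin 4 → ZMod 2, k ≠ k₁ →
      pnorm (2 * lam) (v₂ - encodeE8 lam k₁) < pnorm (2 * lam) (v₂ - encodeE8 lam k) := by
  intro k hk
  set p := 2 * lam with hpdef
  have hp0 : 0 < p := by rw [hpdef]; linarith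
  have hp2 : p / 2 = lam := by rw [hpdef]; ring
  set S := Finset.univ.filter (fun i => Matrix.vecMul k Hmat i ≠ Matrix.vecMul k₁ Hmat i)
    with hS
  have hcard : 4 ≤ S.card := Hmat_dist k k₁ hk
  have hidx : ∀ i, (cmod p ((v₂ - encodeE8 lam k) i))^2 =
      (cmod p ((v₂ - encodeE8 lam k₁) i))^2 +
      (if i ∈ S then (p/2)^2 - p * |cmod p ((v₂ - encodeE8 lam k₁) i)| else 0) := by
    intro i
    by_cases hi : Matrix.vecMul k Hmat i = Matrix.vecMul k₁ Hmat i
    · have hmem : i ∉ S := by simp [hS, hi]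
      rw [if_neg hmem]
      have : (v₂ - encodeE8 lam k) i = (v₂ - encodeE8 lam k₁) i := by
        simp only [Pi.sub_apply, encodeE8, hi]
      rw [this]; ring
    · have hmem : i ∈ S := by simp [hS, hi]
      rw [if_pos hmem]
      rcases zmod2_cases _ _ hi with hc | hc
      · have he : (v₂ - encodeE8 lam k) i = (v₂ - encodeE8 lam k₁) i - p/2 := by
          simp only [Pi.sub_apply, encodeE8]
          rw [hc, hp2]; ring
        rw [he, cmod_half_sq' p _ hp0]; ring
      · have he : (v₂ - encodeE8 lam k) i = (v₂ - encodeE8 lam k₁) i + p/2 := by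
          simp only [Pi.sub_apply, encodeE8]
          rw [hc, hp2]; ring
        rw [he, cmod_half_sq p _ hp0]; ring
  have hsum : ∑ i, (cmod p ((v₂ - encodeE8 lam k) i))^2
      = (∑ i, (cmod p ((v₂ - encodeE8 lam k₁) i))^2) +
        ∑ i ∈ S, ((p/2)^2 - p * |cmod p ((v₂ - encodeE8 lam k₁) i)|) := by
    rw [Finset.sum_congr rfl (fun i _ => hidx i), Finset.sum_add_distrib]
    congr 1
    rw [Finset.sum_ite_mem, Finset.univ_inter]
  set A := ∑ i, (cmod p ((v₂ - encodeE8 lam k₁) i))^2 with hA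
  have hA0 : 0 ≤ A := Finset.sum_nonneg (fun i _ => sq_nonneg _)
  have hAlt : A < lam^2 := by
    rw [pnorm] at h
    exact (Real.sqrt_lt' hlam).mp h
  set T := ∑ i ∈ S, |cmod p ((v₂ - encodeE8 lam k₁) i)| with hT
  have hT0 : 0 ≤ T := Finset.sum_nonneg (fun i _ => abs_nonneg _)
  have hQA : ∑ i ∈ S, (cmod p ((v₂ - encodeE8 lam k₁) i))^2 ≤ A := by
    rw [hA, hS]
    exact Finset.sum_le_sum_of_subset_of_nonneg (Finset.filter_subset _ _)
      (fun i _ _ => sq_nonneg _)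
  have hTQ : T^2 ≤ (S.card : ℝ) * ∑ i ∈ S, (cmod p ((v₂ - encodeE8 lam k₁) i))^2 := by
    have := sq_sum_le_card_mul_sum_sq
      (s := S) (f := fun i => |cmod p ((v₂ - encodeE8 lam k₁) i)|)
    simpa [sq_abs, hT] using this
  have hc4 : (4 : ℝ) ≤ (S.card : ℝ) := by exact_mod_cast hcard
  have hpos : 0 < ∑ i ∈ S, ((p/2)^2 - p * |cmod p ((v₂ - encodeE8 lam k₁) i)|) := by
    rw [Finset.sum_sub_distrib, Finset.sum_const, ← Finset.mul_sum, ← hT, hp2, hpdef,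
      nsmul_eq_mul]
    have hQ0 : 0 ≤ ∑ i ∈ S, (cmod p ((v₂ - encodeE8 lam k₁) i))^2 :=
      Finset.sum_nonneg (fun i _ => sq_nonneg _)
    have hTc : T^2 < (S.card : ℝ) * lam^2 := by
      calc T^2 ≤ (S.card : ℝ) * ∑ i ∈ S, (cmod p ((v₂ - encodeE8 lam k₁) i))^2 := hTQ
        _ ≤ (S.card : ℝ) * A := by
            apply mul_le_mul_of_nonneg_left hQA (by positivity)
        _ < (S.card : ℝ) * lam^2 := by
            apply mul_lt_mul_of_pos_left hAlt (by positivity)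
    nlinarith [hTc, hc4, hT0, hlam, sq_nonneg (2*T - (S.card : ℝ) * lam), mul_pos hlam hlam]
  rw [pnorm, pnorm, hsum, ← hA]
  exact Real.sqrt_lt_sqrt hA0 (by linarith)
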